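/- Let R := max_{i∈[n]} ‖a_i‖, let μ > 0, and let θ̂* ∈ ℝ^d be a unit vector with y_i a_iᵀθ̂* ≥ μ for all i ∈ [n]. Set α := R²/μ. If θ̂ ∈ ℝ^d and the set S := {i ∈ [n] : y_i a_iᵀθ̂ ≤ 0} is nonempty, then the Batch Perceptron update θ̂⁺ := θ̂ + (1/n) Σ_{i∈S} y_i a_i satisfies ‖θ̂⁺ − α θ̂*‖² ≤ ‖θ̂ − α θ̂*‖² − R²/n. -/

import Mathlib

open scoped RealInnerProductSpace BigOperators

/-- **One-step decrease for the Batch Perceptron.** With `α = R²/μ`, if the misclassified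
set `S` at `θ̂` is nonempty, the Batch Perceptron update decreases the squared distance to
`α θ̂*` by at least `R²/n`. -/
theorem batch_perceptron_step_decrease {d n : ℕ}
    (a : Fin n → EuclideanSpace ℝ (Fin d)) (y : Fin n → ℝ)
    (hy : ∀ i, y i = 1 ∨ y i = -1)
    (μ R : ℝ) (hμ : 0 < μ)
    (hR : IsGreatest (Set.range fun i => ‖a i‖) R)
    (θstar : EuclideanSpace ℝ (Fin d)) (hstar : ‖θstar‖ = 1)
    (hmargin : ∀ i, μ ≤ y i * ⟪a i, θstar⟫)
    (θhat : EuclideanSpace ℝ (Fin d))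
    (hS : (Finset.univ.filter (fun i => y i * ⟪a i, θhat⟫ ≤ 0)).Nonempty) :
    ‖θhat + ((1 : ℝ) / n) •
        (∑ i ∈ Finset.univ.filter (fun i => y i * ⟪a i, θhat⟫ ≤ 0), y i • a i)
      - (R ^ 2 / μ) • θstar‖ ^ 2
      ≤ ‖θhat - (R ^ 2 / μ) • θstar‖ ^ 2 - R ^ 2 / n := by
  classical
  set S := Finset.univ.filter (fun i => y i * ⟪a i, θhat⟫ ≤ 0) with hSdef
  obtain ⟨i₀, hi₀⟩ := hS
  have hn : 0 < n := i₀.pos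
  have hnR : (0:ℝ) < n := by exact_mod_cast hn
  have hR0 : 0 ≤ R := by
    obtain ⟨i, hi⟩ := hR.1
    rw [← hi]; positivity
  set α : ℝ := R ^ 2 / μ with hα
  have hα0 : 0 ≤ α := by positivity
  set g : EuclideanSpace ℝ (Fin d) := ((1:ℝ)/n) • ∑ i ∈ S, y i • a i with hg
  set c : ℝ := (S.card : ℝ) with hc
  have hc1 : 1 ≤ c := by
    rw [hc]; exact_mod_cast Finset.card_pos.mpr ⟨i₀, hi₀⟩
  have hcn : c ≤ n := by
    have h : S.card ≤ n := le_trans (Finset.card_filter_le _ _) (by simp)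
    rw [hc]; exact_mod_cast h
  -- inner product with θhat is nonpositive
  have h1 : ⟪θhat, g⟫ ≤ 0 := by
    rw [hg, real_inner_smul_right, inner_sum]
    apply mul_nonpos_of_nonneg_of_nonpos (by positivity)
    apply Finset.sum_nonpos
    intro i hi
    rw [real_inner_smul_right, real_inner_comm]
    exact (Finset.mem_filter.mp hi).2
  -- inner product with θstar is large
  have h2 : c * μ / n ≤ ⟪θstar, g⟫ := by
    rw [hg, real_inner_smul_right, inner_sum]
    have hsum : c * μ ≤ ∑ i ∈ S, ⟪θstar, y i • a i⟫ := by
      have := Finset.card_nsmul_le_sum S (fun i => ⟪θstar, y i • a i⟫) μ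
        (fun i _ => by
          show μ ≤ ⟪θstar, y i • a i⟫
          rw [real_inner_smul_right, real_inner_comm]; exact hmargin i)
      simpa [hc, nsmul_eq_mul] using this
    rw [div_le_iff₀ hnR]
    calc c * μ ≤ ∑ i ∈ S, ⟪θstar, y i • a i⟫ := hsum
      _ = 1 / ↑n * (∑ i ∈ S, ⟪θstar, y i • a i⟫) * ↑n := by field_simp
  -- norm bound
  have h3 : ‖g‖ ≤ c * R / n := by
    rw [hg, norm_smul]
    have hsum : ‖∑ i ∈ S, y i • a i‖ ≤ c * R := by
      refine (norm_sum_le _ _).trans ?_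
      have : ∀ i ∈ S, ‖y i • a i‖ ≤ R := by
        intro i _
        rw [norm_smul]
        have hyi : ‖y i‖ = 1 := by rcases hy i with h | h <;> simp [h]
        rw [hyi, one_mul]
        exact hR.2 ⟨i, rfl⟩
      calc ∑ i ∈ S, ‖y i • a i‖ ≤ ∑ i ∈ S, R := Finset.sum_le_sum this
        _ = c * R := by rw [Finset.sum_const, nsmul_eq_mul]
    have : ‖(1:ℝ)/↑n‖ = 1/n := by
      rw [Real.norm_eq_abs, abs_of_nonneg (by positivity)]
    rw [this]
    calc 1/↑n * ‖∑ i ∈ S, y i • a i‖ ≤ 1/↑n * (c * R) := by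
          apply mul_le_mul_of_nonneg_left hsum (by positivity)
      _ = c * R / n := by ring
  have h3sq : ‖g‖ ^ 2 ≤ (c * R / n) ^ 2 :=
    pow_le_pow_left₀ (norm_nonneg _) h3 2
  -- rewrite the LHS
  have hre : θhat + g - α • θstar = (θhat - α • θstar) + g := by abel
  rw [show θhat + ((1:ℝ)/n) • (∑ i ∈ S, y i • a i) - α • θstar
      = (θhat - α • θstar) + g from hre]
  rw [norm_add_sq_real, inner_sub_left, real_inner_smul_left]
  have key : (c * R / n) ^ 2 ≤ 2 * (α * (c * μ / n)) - R ^ 2 / n := by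
    have hα' : α * μ = R ^ 2 := by
      rw [hα]; field_simp
    have h2cμ : 2 * (α * (c * μ / n)) = 2 * c * R ^ 2 / n := by
      rw [← hα']; ring
    rw [h2cμ, show 2 * c * R ^ 2 / ↑n - R ^ 2 / ↑n = (2 * c * R ^ 2 - R ^ 2) / ↑n from by
      ring]
    rw [div_pow, div_le_div_iff₀ (by positivity) hnR, mul_pow]
    have hfact : 0 ≤ (c - 1) * (↑n - c) := by nlinarith
    have hRsq : 0 ≤ R ^ 2 := sq_nonneg R
    nlinarith [mul_nonneg (mul_nonneg hRsq hnR.le) hfact,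
      mul_nonneg (mul_nonneg hRsq hnR.le)
        (mul_nonneg (by linarith : (0:ℝ) ≤ c) (by linarith : (0:ℝ) ≤ (n:ℝ) - 1))]
  have hαg : α * (c * μ / n) ≤ α * ⟪θstar, g⟫ :=
    mul_le_mul_of_nonneg_left h2 hα0
  linarith [h1, hαg, h3sq, key]
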